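/- Let m ≥ 1 be an integer, let t_1, …, t_{m−1} ∈ (0,1), t_m = 1, and let w_1, …, w_m > 0 with w_m = 1/m². Set r_m(x) = Σ_{i=1}^m w_i f_{t_i}(x), and suppose that the function x ↦ (ln x − r_m(x))/(x−1)^{2m} is bounded on some punctured neighborhood of x = 1 intersected with (0,∞). Define G(x) = Π_{i=1}^{m−1} ((t_i/(1−t_i))·x + 1), Ĝ(x) = x^{m−1}·G(1/x), and c₀ = Π_{i=1}^{m−1} t_i/(1−t_i). Then for all x > 0 one has r_m(x) + r_m(1/x) = −(1/m²)·c₀·(x−1)^{2m} / (x·G(x)·Ĝ(x)). -/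

import Mathlib

/-- The function `f_t(x) = (x-1)/(t(x-1)+1)`. -/
noncomputable def ft (t x : ℝ) : ℝ := (x - 1) / (t * (x - 1) + 1)

open Polynomial Finset

lemma aux_pos (t x : ℝ) (ht0 : 0 ≤ t) (ht1 : t ≤ 1) (hx : 0 < x) : 0 < t * x + (1 - t) := by
  rcases le_total x 1 with h | h
  · nlinarith
  · nlinarith

lemma ft_pair (t x : ℝ) (ht0 : 0 ≤ t) (ht1 : t ≤ 1) (hx : 0 < x) :
    ft t x + ft t (1 / x) =
      (1 - 2 * t) * (x - 1) ^ 2 / ((t * x + (1 - t)) * ((1 - t) * x + t)) := by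
  have h1 : (0:ℝ) < t * x + (1 - t) := aux_pos t x ht0 ht1 hx
  have h2 : (0:ℝ) < (1 - t) * x + t := by
    have := aux_pos (1 - t) x (by linarith) (by linarith) hx
    linarith [this]
  have hx0 : x ≠ 0 := ne_of_gt hx
  have hd1 : t * (x - 1) + 1 ≠ 0 := by nlinarith
  have hd2 : t * (1 / x - 1) + 1 ≠ 0 := by
    have : t * (1 / x - 1) + 1 = ((1 - t) * x + t) / x := by field_simp; ring
    rw [this]
    positivity
  unfold ft
  rw [div_add_div _ _ hd1 hd2]
  rw [div_eq_div_iff (by exact mul_ne_zero hd1 hd2) (by positivity)]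
  field_simp
  ring

set_option maxHeartbeats 2000000

lemma dvd_of_abs_le (n : ℕ) : ∀ (P : Polynomial ℝ) (B δ : ℝ), 0 < δ →
    (∀ x : ℝ, x ≠ 1 → |x - 1| < δ → |P.eval x| ≤ B * |x - 1| ^ n) →
    ((X : Polynomial ℝ) - 1) ^ n ∣ P := by
  induction n with
  | zero => intro P B δ hδ h; simpa using one_dvd P
  | succ n ih =>
    intro P B δ hδ hP
    have hroot : P.eval 1 = 0 := by
      by_contra h
      set E := |P.eval 1| with hE
      have hEpos : 0 < E := abs_pos.mpr h
      have hc : ContinuousAt (fun y : ℝ => P.eval y) 1 :=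
        (Polynomial.continuous_aeval P).continuousAt
      rw [Metric.continuousAt_iff] at hc
      obtain ⟨δ₁, hδ₁, hc⟩ := hc (E / 2) (by linarith)
      set r := min (min δ δ₁) (min 1 (E / (2 * (|B| + 1)))) / 2 with hr
      have hrpos : 0 < r := by
        apply div_pos _ (by norm_num)
        apply lt_min (lt_min hδ hδ₁) (lt_min one_pos _)
        positivity
      have hr1 : r ≤ 1 := by
        have : min (min δ δ₁) (min 1 (E / (2 * (|B| + 1)))) ≤ 1 :=
          le_trans (min_le_right _ _) (min_le_left _ _)
        linarith
      have hrδ : r < δ := by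
        have : min (min δ δ₁) (min 1 (E / (2 * (|B| + 1)))) ≤ δ :=
          le_trans (min_le_left _ _) (min_le_left _ _)
        linarith
      have hrδ₁ : r < δ₁ := by
        have : min (min δ δ₁) (min 1 (E / (2 * (|B| + 1)))) ≤ δ₁ :=
          le_trans (min_le_left _ _) (min_le_right _ _)
        linarith
      have hrE : r ≤ E / (2 * (|B| + 1)) := by
        have : min (min δ δ₁) (min 1 (E / (2 * (|B| + 1)))) ≤ E / (2 * (|B| + 1)) :=
          le_trans (min_le_right _ _) (min_le_right _ _)
        linarith
      set y := 1 + r with hy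
      have hyne : y ≠ 1 := by simp [hy]; linarith
      have hyd : |y - 1| < δ := by rw [hy]; simp [abs_of_pos hrpos]; linarith
      have hyd' : dist y 1 < δ₁ := by simp [hy, Real.dist_eq, abs_of_pos hrpos]; linarith
      have hbig : E / 2 < |P.eval y| := by
        have := hc hyd'
        have h2 : |P.eval y - P.eval 1| < E / 2 := by simpa [Real.dist_eq] using this
        have := abs_sub_abs_le_abs_sub (P.eval 1) (P.eval y)
        rw [abs_sub_comm] at h2
        linarith
      have hsmall : |P.eval y| ≤ B * |y - 1| ^ (n + 1) := hP y hyne hyd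
      have hyabs : |y - 1| = r := by rw [hy]; simp [abs_of_pos hrpos]
      rw [hyabs] at hsmall
      have hpow : r ^ (n + 1) ≤ r := by
        calc r ^ (n + 1) ≤ r ^ 1 := pow_le_pow_of_le_one (le_of_lt hrpos) hr1 (by omega)
        _ = r := pow_one r
      have hBr : B * r ^ (n + 1) ≤ |B| * r := by
        calc B * r ^ (n + 1) ≤ |B| * r ^ (n + 1) := by
              apply mul_le_mul_of_nonneg_right (le_abs_self B) (by positivity)
        _ ≤ |B| * r := by apply mul_le_mul_of_nonneg_left hpow (abs_nonneg B)
      have hBE : |B| * r < E / 2 := by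
        have h1 : |B| * r ≤ |B| * (E / (2 * (|B| + 1))) :=
          mul_le_mul_of_nonneg_left hrE (abs_nonneg B)
        have hB1 : 0 ≤ |B| := abs_nonneg B
        have h2 : |B| * (E / (2 * (|B| + 1))) < E / 2 := by
          rw [mul_div_assoc']; rw [div_lt_div_iff₀ (by positivity) (by norm_num)]
          nlinarith
        linarith
      linarith
    have hdvd : (X - 1 : Polynomial ℝ) ∣ P := by
      have : (X - C (1:ℝ)) ∣ P := (dvd_iff_isRoot).mpr hroot
      simpa using this
    obtain ⟨P₁, hP₁⟩ := hdvd
    have hbnd : ∀ y : ℝ, y ≠ 1 → |y - 1| < δ → |P₁.eval y| ≤ B * |y - 1| ^ n := by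
      intro y hy hyd
      have := hP y hy hyd
      rw [hP₁] at this
      simp only [Polynomial.eval_mul, Polynomial.eval_sub, Polynomial.eval_X,
        Polynomial.eval_one] at this
      rw [abs_mul] at this
      have hy0 : 0 < |y - 1| := abs_pos.mpr (sub_ne_zero.mpr hy)
      rw [pow_succ] at this
      have h3 : |P₁.eval y| * |y - 1| ≤ (B * |y - 1| ^ n) * |y - 1| := by
        nlinarith [this]
      exact le_of_mul_le_mul_right h3 hy0
    have := ih P₁ B δ hδ hbnd
    rw [hP₁, pow_succ']
    exact mul_dvd_mul_left _ this

/-- Under the Gauss–Radau hypotheses (`t_1, …, t_{m-1} ∈ (0,1)`, `t_m = 1`,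
`w_1, …, w_m > 0`, `w_m = 1/m²`, and boundedness of `(ln x - r_m(x))/(x-1)^{2m}` near `x = 1`),
one has the identity
`r_m(x) + r_m(1/x) = -(1/m²)·c₀·(x-1)^{2m} / (x·G(x)·Ĝ(x))` for all `x > 0`, where
`G(x) = ∏_{i<m-1} ((t_i/(1-t_i))x + 1)`, `Ĝ(x) = x^{m-1}·G(1/x)` and
`c₀ = ∏_{i<m-1} t_i/(1-t_i)`. Nodes are indexed by `Fin m`, with the last node/weight the one
of index `m - 1`. -/
theorem rm_self_plus_rm_inv_eq (m : ℕ) (hm : 1 ≤ m) (t w : Fin m → ℝ)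
    (ht : ∀ i : Fin m, (i : ℕ) < m - 1 → t i ∈ Set.Ioo (0 : ℝ) 1)
    (htm : ∀ i : Fin m, (i : ℕ) = m - 1 → t i = 1)
    (hw : ∀ i, 0 < w i)
    (hwm : ∀ i : Fin m, (i : ℕ) = m - 1 → w i = 1 / (m : ℝ) ^ 2)
    (hbound : ∃ M δ : ℝ, 0 < δ ∧
      ∀ x : ℝ, 0 < x → x ≠ 1 → |x - 1| < δ →
        |(Real.log x - ∑ i, w i * ft (t i) x) / (x - 1) ^ (2 * m)| ≤ M) :
    ∀ x : ℝ, 0 < x →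
      (∑ i, w i * ft (t i) x) + (∑ i, w i * ft (t i) (1 / x)) =
        -(1 / (m : ℝ) ^ 2) *
          ((∏ i ∈ Finset.univ.filter (fun i : Fin m => (i : ℕ) < m - 1), t i / (1 - t i)) *
            (x - 1) ^ (2 * m)) /
          (x * (∏ i ∈ Finset.univ.filter (fun i : Fin m => (i : ℕ) < m - 1),
                  (t i / (1 - t i) * x + 1)) *
            (x ^ (m - 1) *
              ∏ i ∈ Finset.univ.filter (fun i : Fin m => (i : ℕ) < m - 1),
                (t i / (1 - t i) * (1 / x) + 1))) := by
  classical
  obtain ⟨M, δ₀, hδ₀, hM⟩ := hbound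
  set last : Fin m := ⟨m - 1, by omega⟩ with hlast
  have htlast : t last = 1 := htm last rfl
  have hwlast : w last = 1 / (m : ℝ) ^ 2 := hwm last rfl
  have hS : Finset.univ.filter (fun i : Fin m => (i : ℕ) < m - 1) = Finset.univ.erase last := by
    ext i
    simp only [Finset.mem_filter, Finset.mem_univ, true_and, Finset.mem_erase, and_true,
      Fin.ne_iff_vne, hlast, Fin.val_mk]
    have hi : (i : ℕ) < m := i.isLt
    omega
  have ht01 : ∀ i, 0 ≤ t i ∧ t i ≤ 1 := by
    intro i
    by_cases h : (i : ℕ) = m - 1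
    · rw [htm i h]; norm_num
    · have hi : (i : ℕ) < m - 1 := by have := i.isLt; omega
      obtain ⟨h1, h2⟩ := ht i hi
      exact ⟨le_of_lt h1, le_of_lt h2⟩
  have hterase : ∀ i ∈ Finset.univ.erase last, 0 < t i ∧ t i < 1 := by
    intro i hi
    rw [← hS] at hi
    simp only [Finset.mem_filter] at hi
    exact ⟨(ht i hi.2).1, (ht i hi.2).2⟩
  -- the polynomials
  set a : Fin m → Polynomial ℝ := fun i => C (t i) * X + C (1 - t i) with ha
  set b : Fin m → Polynomial ℝ := fun i => C (1 - t i) * X + C (t i) with hb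
  set Q : Polynomial ℝ := ∏ i, a i * b i with hQ
  set g : Fin m → Fin m → Polynomial ℝ := fun i j =>
    if j = i then C (w i * (1 - 2 * t i)) * ((X : Polynomial ℝ) - 1) ^ 2 else a j * b j with hg
  set P : Polynomial ℝ := ∑ i, ∏ j, g i j with hP
  -- evaluation
  have hQeval : ∀ y : ℝ, Q.eval y = ∏ i, (t i * y + (1 - t i)) * ((1 - t i) * y + t i) := by
    intro y
    rw [hQ, Polynomial.eval_prod]
    exact Finset.prod_congr rfl fun i _ => by simp [ha, hb]
  have hfacpos : ∀ (i : Fin m) (y : ℝ), 0 < y →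
      0 < (t i * y + (1 - t i)) * ((1 - t i) * y + t i) := by
    intro i y hy
    have h1 := aux_pos (t i) y (ht01 i).1 (ht01 i).2 hy
    have h2 := aux_pos (1 - t i) y (by linarith [(ht01 i).2]) (by linarith [(ht01 i).1]) hy
    have h2' : 0 < (1 - t i) * y + t i := by linarith
    exact mul_pos h1 h2'
  have hQpos : ∀ y : ℝ, 0 < y → 0 < Q.eval y := by
    intro y hy
    rw [hQeval]
    exact Finset.prod_pos fun i _ => hfacpos i y hy
  -- the key algebraic identity : S(y) * Q(y) = P(y)
  have hSQ : ∀ y : ℝ, 0 < y →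
      ((∑ i, w i * ft (t i) y) + (∑ i, w i * ft (t i) (1 / y))) * Q.eval y = P.eval y := by
    intro y hy
    rw [← Finset.sum_add_distrib]
    have h1 : ∀ i : Fin m, w i * ft (t i) y + w i * ft (t i) (1 / y) =
        w i * ((1 - 2 * t i) * (y - 1) ^ 2 /
          ((t i * y + (1 - t i)) * ((1 - t i) * y + t i))) := by
      intro i
      rw [← mul_add, ft_pair (t i) y (ht01 i).1 (ht01 i).2 hy]
    rw [Finset.sum_congr rfl fun i _ => h1 i, Finset.sum_mul, hP, Polynomial.eval_finset_sum]
    apply Finset.sum_congr rfl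
    intro i _
    have hevali : Polynomial.eval y (∏ j, g i j) =
        (w i * (1 - 2 * t i)) * (y - 1) ^ 2 *
          ∏ j ∈ Finset.univ.erase i, (t j * y + (1 - t j)) * ((1 - t j) * y + t j) := by
      rw [Polynomial.eval_prod, ← Finset.mul_prod_erase Finset.univ _ (Finset.mem_univ i)]
      congr 1
      · simp [hg]
      · apply Finset.prod_congr rfl
        intro j hj
        rw [hg]
        simp only [Finset.ne_of_mem_erase hj, if_false]
        simp [ha, hb]
    rw [hevali, hQeval, ← Finset.mul_prod_erase Finset.univ _ (Finset.mem_univ i)]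
    have hd : (t i * y + (1 - t i)) * ((1 - t i) * y + t i) ≠ 0 := ne_of_gt (hfacpos i y hy)
    rw [mul_div_assoc', div_mul_eq_mul_div, div_eq_iff hd]
    ring
  -- the constant
  set c : ℝ := -(1 / (m : ℝ) ^ 2) * ∏ i ∈ Finset.univ.erase last, (t i * (1 - t i)) with hc
  set DF : Polynomial ℝ := P - C c * ((X : Polynomial ℝ) - 1) ^ (2 * m) with hDF
  -- bound on DF near 1
  have hbnd : ∃ B δ : ℝ, 0 < δ ∧ ∀ y : ℝ, y ≠ 1 → |y - 1| < δ →
      |DF.eval y| ≤ B * |y - 1| ^ (2 * m) := by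
    set M' := |M| with hM'
    have hMM : M ≤ M' := le_abs_self M
    have hM'0 : 0 ≤ M' := abs_nonneg M
    have hQc : ContinuousAt (fun y : ℝ => Q.eval y) 1 :=
      (Polynomial.continuous_aeval Q).continuousAt
    rw [Metric.continuousAt_iff] at hQc
    obtain ⟨δQ, hδQ, hQc⟩ := hQc 1 one_pos
    refine ⟨M' * (1 + 2 ^ (2 * m)) * (|Q.eval 1| + 1) + |c|,
      min (δ₀ / 2) (min (1 / 2) δQ), by positivity, ?_⟩
    intro y hyne hyd
    have hyd0 : |y - 1| < δ₀ / 2 := lt_of_lt_of_le hyd (min_le_left _ _)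
    have hyhalf : |y - 1| < 1 / 2 :=
      lt_of_lt_of_le hyd (le_trans (min_le_right _ _) (min_le_left _ _))
    have hydQ : |y - 1| < δQ :=
      lt_of_lt_of_le hyd (le_trans (min_le_right _ _) (min_le_right _ _))
    have hypos : 0 < y := by
      obtain ⟨h1, h2⟩ := abs_lt.mp hyhalf; linarith
    have hyabs0 : 0 < |y - 1| := abs_pos.mpr (sub_ne_zero.mpr hyne)
    have habs : ∀ z u : ℝ, u ≠ 1 → |z / (u - 1) ^ (2 * m)| ≤ M →
        |z| ≤ M' * |u - 1| ^ (2 * m) := by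
      intro z u hu hz
      have hu0 : 0 < |u - 1| := abs_pos.mpr (sub_ne_zero.mpr hu)
      have hupow : 0 < |(u - 1) ^ (2 * m)| := by rw [abs_pow]; positivity
      rw [abs_div, div_le_iff₀ hupow, abs_pow] at hz
      calc |z| ≤ M * |u - 1| ^ (2 * m) := hz
        _ ≤ M' * |u - 1| ^ (2 * m) := by
            apply mul_le_mul_of_nonneg_right hMM (by positivity)
    have hb1 : |Real.log y - ∑ i, w i * ft (t i) y| ≤ M' * |y - 1| ^ (2 * m) :=
      habs _ _ hyne (hM y hypos hyne (by linarith))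
    have hyinvpos : 0 < 1 / y := by positivity
    have hyinvne : (1 : ℝ) / y ≠ 1 := by
      intro h
      apply hyne
      field_simp at h
      linarith
    have hinvdist : |1 / y - 1| ≤ 2 * |y - 1| := by
      have he : 1 / y - 1 = -(y - 1) / y := by field_simp; ring
      rw [he, abs_div, abs_neg, abs_of_pos hypos, div_le_iff₀ hypos]
      have hy2 : (1 : ℝ) / 2 ≤ y := by
        obtain ⟨h1, h2⟩ := abs_lt.mp hyhalf; linarith
      nlinarith [abs_nonneg (y - 1)]
    have h2 := hM (1 / y) hyinvpos hyinvne (by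
      calc |1 / y - 1| ≤ 2 * |y - 1| := hinvdist
        _ < δ₀ := by linarith)
    have hb2 : |Real.log (1 / y) - ∑ i, w i * ft (t i) (1 / y)| ≤
        M' * (2 * |y - 1|) ^ (2 * m) := by
      apply le_trans (habs _ _ hyinvne h2)
      apply mul_le_mul_of_nonneg_left _ hM'0
      exact pow_le_pow_left₀ (abs_nonneg _) hinvdist _
    have hlog : Real.log (1 / y) = -Real.log y := by rw [one_div, Real.log_inv]
    have hsum : (∑ i, w i * ft (t i) y) + (∑ i, w i * ft (t i) (1 / y)) =
        -((Real.log y - ∑ i, w i * ft (t i) y) +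
          (Real.log (1 / y) - ∑ i, w i * ft (t i) (1 / y))) := by
      rw [hlog]; ring
    have hSb : |(∑ i, w i * ft (t i) y) + (∑ i, w i * ft (t i) (1 / y))| ≤
        M' * (1 + 2 ^ (2 * m)) * |y - 1| ^ (2 * m) := by
      rw [hsum, abs_neg]
      calc |(Real.log y - ∑ i, w i * ft (t i) y) +
            (Real.log (1 / y) - ∑ i, w i * ft (t i) (1 / y))| ≤
            |Real.log y - ∑ i, w i * ft (t i) y| +
            |Real.log (1 / y) - ∑ i, w i * ft (t i) (1 / y)| := abs_add_le _ _
        _ ≤ M' * |y - 1| ^ (2 * m) + M' * (2 * |y - 1|) ^ (2 * m) := add_le_add hb1 hb2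
        _ = M' * (1 + 2 ^ (2 * m)) * |y - 1| ^ (2 * m) := by rw [mul_pow]; ring
    have hQb : |Q.eval y| ≤ |Q.eval 1| + 1 := by
      have h3 := hQc (show dist y 1 < δQ by rwa [Real.dist_eq])
      rw [Real.dist_eq] at h3
      calc |Q.eval y| = |Q.eval 1 + (Q.eval y - Q.eval 1)| := by ring_nf
        _ ≤ |Q.eval 1| + |Q.eval y - Q.eval 1| := abs_add_le _ _
        _ ≤ |Q.eval 1| + 1 := by linarith
    have hPb : |P.eval y| ≤ M' * (1 + 2 ^ (2 * m)) * (|Q.eval 1| + 1) * |y - 1| ^ (2 * m) := by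
      rw [← hSQ y hypos, abs_mul]
      calc |(∑ i, w i * ft (t i) y) + (∑ i, w i * ft (t i) (1 / y))| * |Q.eval y| ≤
            (M' * (1 + 2 ^ (2 * m)) * |y - 1| ^ (2 * m)) * (|Q.eval 1| + 1) :=
            mul_le_mul hSb hQb (abs_nonneg _) (by positivity)
        _ = M' * (1 + 2 ^ (2 * m)) * (|Q.eval 1| + 1) * |y - 1| ^ (2 * m) := by ring
    have hDFe : DF.eval y = P.eval y - c * (y - 1) ^ (2 * m) := by
      rw [hDF]; simp
    rw [hDFe, sub_eq_add_neg]
    calc |P.eval y + -(c * (y - 1) ^ (2 * m))| ≤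
          |P.eval y| + |-(c * (y - 1) ^ (2 * m))| := abs_add_le _ _
      _ ≤ M' * (1 + 2 ^ (2 * m)) * (|Q.eval 1| + 1) * |y - 1| ^ (2 * m) +
          |c| * |y - 1| ^ (2 * m) := by
          apply add_le_add hPb
          rw [abs_neg, abs_mul, abs_pow]
      _ = (M' * (1 + 2 ^ (2 * m)) * (|Q.eval 1| + 1) + |c|) * |y - 1| ^ (2 * m) := by ring
  obtain ⟨B, δ, hδ, hBd⟩ := hbnd
  have hdvd : ((X : Polynomial ℝ) - 1) ^ (2 * m) ∣ DF := dvd_of_abs_le (2 * m) DF B δ hδ hBd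
  -- degree and coefficient computations
  have hg2 : ∀ i j : Fin m, (g i j).natDegree ≤ 2 := by
    intro i j
    rw [hg]
    dsimp only
    split
    · apply le_trans (Polynomial.natDegree_C_mul_le _ _)
      have h1 : ((X : Polynomial ℝ) - 1) = X - C 1 := by rw [map_one]
      rw [h1, Polynomial.natDegree_pow, Polynomial.natDegree_X_sub_C]
    · apply le_trans (Polynomial.natDegree_mul_le)
      have hda : (a j).natDegree ≤ 1 := by
        rw [ha]; exact Polynomial.natDegree_linear_le
      have hdb : (b j).natDegree ≤ 1 := by
        rw [hb]; exact Polynomial.natDegree_linear_le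
      omega
  have hPdeg : P.natDegree ≤ 2 * m := by
    rw [hP]
    apply Polynomial.natDegree_sum_le_of_forall_le
    intro i _
    apply le_trans (Polynomial.natDegree_prod_le _ _)
    calc ∑ j : Fin m, (g i j).natDegree ≤ ∑ _j : Fin m, 2 :=
          Finset.sum_le_sum fun j _ => hg2 i j
      _ = 2 * m := by
          rw [Finset.sum_const, Finset.card_univ, Fintype.card_fin, smul_eq_mul]; ring
  have hcoeff2 : ∀ i j : Fin m, (g i j).coeff 2 =
      if j = i then w i * (1 - 2 * t i) else t j * (1 - t j) := by
    intro i j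
    rw [hg]
    dsimp only
    split
    · have h1 : ((X : Polynomial ℝ) - 1) = X - C 1 := by rw [map_one]
      have h2 : (((X : Polynomial ℝ) - 1) ^ 2).Monic := by
        rw [h1]; exact (Polynomial.monic_X_sub_C 1).pow 2
      have h3 : (((X : Polynomial ℝ) - 1) ^ 2).natDegree = 2 := by
        rw [h1, Polynomial.natDegree_pow, Polynomial.natDegree_X_sub_C, mul_one]
      have h4 := h2.coeff_natDegree
      rw [h3] at h4
      rw [Polynomial.coeff_C_mul, h4, mul_one]
    · have hexp : a j * b j = C (t j * (1 - t j)) * X ^ 2 +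
          C (t j * t j + (1 - t j) * (1 - t j)) * X + C ((1 - t j) * t j) := by
        rw [ha, hb]
        dsimp only
        simp only [map_mul, map_add]
        ring
      rw [hexp]
      simp only [Polynomial.coeff_add, Polynomial.coeff_C_mul, Polynomial.coeff_X_pow,
        Polynomial.coeff_C, Polynomial.coeff_X]
      norm_num
  have hPcoeff : P.coeff (2 * m) = c := by
    rw [hP, Polynomial.finset_sum_coeff]
    have hcard : (Finset.univ : Finset (Fin m)).card = m := by
      rw [Finset.card_univ, Fintype.card_fin]
    have hcoeffprod : ∀ i : Fin m, (∏ j, g i j).coeff (2 * m) =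
        (w i * (1 - 2 * t i)) * ∏ j ∈ Finset.univ.erase i, (t j * (1 - t j)) := by
      intro i
      have h1 := Polynomial.coeff_prod_of_natDegree_le (s := Finset.univ) (g i) 2
        (fun j _ => hg2 i j)
      rw [hcard] at h1
      rw [show 2 * m = m * 2 by ring, h1,
        ← Finset.mul_prod_erase Finset.univ _ (Finset.mem_univ i)]
      congr 1
      · rw [hcoeff2]; simp
      · exact Finset.prod_congr rfl fun j hj => by
          rw [hcoeff2, if_neg (Finset.ne_of_mem_erase hj)]
    rw [Finset.sum_congr rfl fun i _ => hcoeffprod i]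
    rw [Finset.sum_eq_single last]
    · rw [hwlast, htlast, hc]; ring
    · intro i _ hine
      have hlmem : last ∈ Finset.univ.erase i :=
        Finset.mem_erase.mpr ⟨Ne.symm hine, Finset.mem_univ _⟩
      rw [Finset.prod_eq_zero hlmem (by rw [htlast]; ring)]
      ring
    · intro h; exact absurd (Finset.mem_univ last) h
  have hX1deg : (((X : Polynomial ℝ) - 1) ^ (2 * m)).natDegree = 2 * m := by
    have : ((X : Polynomial ℝ) - 1) = X - C 1 := by rw [map_one]
    rw [this, Polynomial.natDegree_pow, Polynomial.natDegree_X_sub_C, mul_one]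
  have hX1coeff : (((X : Polynomial ℝ) - 1) ^ (2 * m)).coeff (2 * m) = 1 := by
    have h1 : ((X : Polynomial ℝ) - 1) = X - C 1 := by rw [map_one]
    have h2 : (((X : Polynomial ℝ) - 1) ^ (2 * m)).Monic := by
      rw [h1]; exact (Polynomial.monic_X_sub_C 1).pow (2 * m)
    have := h2.coeff_natDegree
    rwa [hX1deg] at this
  have hDF0 : DF = 0 := by
    by_contra h
    have hDFdeg : DF.natDegree ≤ 2 * m := by
      apply le_trans (Polynomial.natDegree_sub_le _ _)
      apply max_le hPdeg
      apply le_trans (Polynomial.natDegree_C_mul_le _ _)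
      rw [hX1deg]
    have hDFcoeff : DF.coeff (2 * m) = 0 := by
      rw [hDF, Polynomial.coeff_sub, Polynomial.coeff_C_mul, hPcoeff, hX1coeff, mul_one, sub_self]
    have hne : DF.natDegree ≠ 2 * m := by
      intro he
      apply h
      rw [← Polynomial.leadingCoeff_eq_zero, Polynomial.leadingCoeff, he]
      exact hDFcoeff
    have hlt : DF.natDegree < 2 * m := lt_of_le_of_ne hDFdeg hne
    exact h (Polynomial.eq_zero_of_dvd_of_natDegree_lt hdvd (by rwa [hX1deg]))
  have hPeq : P = C c * ((X : Polynomial ℝ) - 1) ^ (2 * m) := by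
    have := sub_eq_zero.mp hDF0
    exact this
  -- conclude
  intro x hx
  have hQx : Q.eval x ≠ 0 := ne_of_gt (hQpos x hx)
  have hfin : (∑ i, w i * ft (t i) x) + (∑ i, w i * ft (t i) (1 / x)) =
      c * (x - 1) ^ (2 * m) / Q.eval x := by
    have h := hSQ x hx
    rw [hPeq] at h
    simp only [Polynomial.eval_mul, Polynomial.eval_pow, Polynomial.eval_sub,
      Polynomial.eval_X, Polynomial.eval_one, Polynomial.eval_C] at h
    field_simp
    rw [h]
  rw [hfin, hS]
  -- final algebra
  have hne1t : ∀ i ∈ Finset.univ.erase last, (1 : ℝ) - t i ≠ 0 := by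
    intro i hi; have := (hterase i hi).2; linarith
  have hcards : (Finset.univ.erase last).card = m - 1 := by
    rw [Finset.card_erase_of_mem (Finset.mem_univ _), Finset.card_univ, Fintype.card_fin]
  set A : ℝ := ∏ i ∈ Finset.univ.erase last, (t i * x + (1 - t i)) with hA
  set Bp : ℝ := ∏ i ∈ Finset.univ.erase last, ((1 - t i) * x + t i) with hBp
  set T : ℝ := ∏ i ∈ Finset.univ.erase last, (t i * (1 - t i)) with hT
  set p : ℝ := ∏ i ∈ Finset.univ.erase last, (1 - t i) with hpdef
  have hApos : 0 < A := Finset.prod_pos fun i hi =>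
    aux_pos (t i) x (ht01 i).1 (ht01 i).2 hx
  have hBpos : 0 < Bp := Finset.prod_pos fun i hi => by
    have := aux_pos (1 - t i) x (by linarith [(ht01 i).2]) (by linarith [(ht01 i).1]) hx
    linarith
  have hppos : 0 < p := Finset.prod_pos fun i hi => by
    have := (hterase i hi).2; linarith
  have hG : ∏ i ∈ Finset.univ.erase last, (t i / (1 - t i) * x + 1) = A / p := by
    rw [hA, hpdef, ← Finset.prod_div_distrib]
    apply Finset.prod_congr rfl
    intro i hi
    have h1 := hne1t i hi
    field_simp
  have hH : ∏ i ∈ Finset.univ.erase last, (t i / (1 - t i) * (1 / x) + 1) =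
      Bp / (p * x ^ (m - 1)) := by
    have hfac : ∀ i ∈ Finset.univ.erase last,
        t i / (1 - t i) * (1 / x) + 1 = ((1 - t i) * x + t i) / ((1 - t i) * x) := by
      intro i hi
      have h1 := hne1t i hi
      field_simp
      ring
    rw [Finset.prod_congr rfl hfac, Finset.prod_div_distrib, Finset.prod_mul_distrib,
      Finset.prod_const, hcards, ← hBp, ← hpdef]
  have hTeq : ∏ i ∈ Finset.univ.erase last, (t i / (1 - t i)) = T / p ^ 2 := by
    have hp2 : p ^ 2 = ∏ i ∈ Finset.univ.erase last, (1 - t i) ^ 2 := by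
      rw [hpdef, ← Finset.prod_pow]
    rw [hp2, hT, ← Finset.prod_div_distrib]
    apply Finset.prod_congr rfl
    intro i hi
    have h1 := hne1t i hi
    field_simp
  have hQxval : Q.eval x = x * (A * Bp) := by
    rw [hQeval, ← Finset.mul_prod_erase Finset.univ _ (Finset.mem_univ last),
      Finset.prod_mul_distrib, ← hA, ← hBp]
    rw [htlast]
    ring
  rw [hG, hH, hTeq, hQxval, hc]
  have hxne : x ≠ 0 := ne_of_gt hx
  have hAne : A ≠ 0 := ne_of_gt hApos
  have hBne : Bp ≠ 0 := ne_of_gt hBpos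
  have hpne : p ≠ 0 := ne_of_gt hppos
  have hxmne : x ^ (m - 1) ≠ 0 := pow_ne_zero _ hxne
  have hmne : (m : ℝ) ≠ 0 := Nat.cast_ne_zero.mpr (by omega)
  field_simp
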